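/- For every positive integer n: v_2(F_n) = 0 if n ≡ 1 or 2 (mod 3); v_2(F_n) = 1 if n ≡ 3 (mod 6); v_2(F_n) = 3 if n ≡ 6 (mod 12); and v_2(F_n) = v_2(n) + 2 if n ≡ 0 (mod 12). -/

import Mathlib

private lemma fib_add_period (p m : ℕ) (h0 : Nat.fib p % m = 0)
    (h1 : Nat.fib (p + 1) % m = 1 % m) (n : ℕ) :
    Nat.fib (p + n) % m = Nat.fib n % m := by
  cases n with
  | zero => simpa using h0
  | succ k =>
    have h : p + (k + 1) = p + k + 1 := rfl
    rw [h, Nat.fib_add]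
    have h0' : Nat.fib p ≡ 0 [MOD m] := by
      unfold Nat.ModEq; simp [h0]
    have h1' : Nat.fib (p + 1) ≡ 1 [MOD m] := h1
    have h2 := (h0'.mul_right (Nat.fib k)).add (h1'.mul_right (Nat.fib (k + 1)))
    show _ ≡ _ [MOD m]
    simpa using h2

private lemma fib_mul_period (p m : ℕ) (h0 : Nat.fib p % m = 0)
    (h1 : Nat.fib (p + 1) % m = 1 % m) (q n : ℕ) :
    Nat.fib (p * q + n) % m = Nat.fib n % m := by
  induction q with
  | zero => simp
  | succ k ih =>
    have h : p * (k + 1) + n = p + (p * k + n) := by ring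
    rw [h, fib_add_period p m h0 h1, ih]

private lemma fib_mod_mod (p m : ℕ) (h0 : Nat.fib p % m = 0)
    (h1 : Nat.fib (p + 1) % m = 1 % m) (n : ℕ) :
    Nat.fib n % m = Nat.fib (n % p) % m := by
  conv_lhs => rw [← Nat.div_add_mod n p]
  exact fib_mul_period p m h0 h1 (n / p) (n % p)

private lemma v2_mod (k : ℕ) {x : ℕ} (h : x % 2 ^ (k + 1) = 2 ^ k) :
    padicValNat 2 x = k := by
  have h2 : (2 : ℕ) ^ (k + 1) = 2 * 2 ^ k := by ring
  have hq : x = 2 ^ k * (2 * (x / 2 ^ (k + 1)) + 1) := by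
    calc x = 2 ^ (k + 1) * (x / 2 ^ (k + 1)) + x % 2 ^ (k + 1) :=
          (Nat.div_add_mod _ _).symm
    _ = 2 ^ (k + 1) * (x / 2 ^ (k + 1)) + 2 ^ k := by rw [h]
    _ = 2 ^ k * (2 * (x / 2 ^ (k + 1)) + 1) := by rw [h2]; ring
  rw [hq, padicValNat.mul (pow_ne_zero _ two_ne_zero) (by omega),
    padicValNat.prime_pow, padicValNat.eq_zero_of_not_dvd (by omega)]
  omega

private lemma v2_fib_6mod12 (n : ℕ) (h : n % 12 = 6) :
    padicValNat 2 (Nat.fib n) = 3 := by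
  have key : Nat.fib n % 16 = 8 := by
    rw [fib_mod_mod 24 16 (by decide) (by decide) n]
    rcases (by omega : n % 24 = 6 ∨ n % 24 = 18) with h' | h' <;>
      rw [h'] <;> simp [Nat.fib_add_two]
  exact v2_mod 3 (by norm_num; exact key)

private lemma aux12 : ∀ n : ℕ, 0 < n → n % 12 = 0 →
    padicValNat 2 (Nat.fib n) = padicValNat 2 n + 2 := by
  intro n
  induction n using Nat.strong_induction_on with
  | _ n ih =>
    intro hpos h12
    obtain ⟨m, rfl⟩ : ∃ m, n = 2 * m := ⟨n / 2, by omega⟩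
    rw [Nat.fib_two_mul]
    have hm1 : Nat.fib (m + 1) % 2 = 1 := by
      rw [fib_mod_mod 3 2 (by decide) (by decide)]
      have h3 : (m + 1) % 3 = 1 := by omega
      rw [h3]; rfl
    have hf4 : Nat.fib m % 4 = 0 := by
      rw [fib_mod_mod 6 4 (by decide) (by decide)]
      have h6 : m % 6 = 0 := by omega
      rw [h6]; rfl
    have hle : Nat.fib m ≤ 2 * Nat.fib (m + 1) := by
      have := Nat.fib_le_fib_succ (n := m); omega
    have hsub : (2 * Nat.fib (m + 1) - Nat.fib m) % 4 = 2 := by omega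
    have hfm0 : Nat.fib m ≠ 0 := (Nat.fib_pos.mpr (by omega)).ne'
    rw [padicValNat.mul hfm0 (by omega)]
    have hv1 : padicValNat 2 (2 * Nat.fib (m + 1) - Nat.fib m) = 1 :=
      v2_mod 1 (by norm_num; exact hsub)
    have hvn : padicValNat 2 (2 * m) = padicValNat 2 m + 1 := by
      rw [padicValNat.mul two_ne_zero (by omega), padicValNat.self (by norm_num)]
      omega
    rcases (by omega : m % 12 = 6 ∨ m % 12 = 0) with hm | hm
    · rw [v2_fib_6mod12 m hm, hv1]
      have hv : padicValNat 2 m = 1 := v2_mod 1 (by norm_num; omega)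
      omega
    · rw [ih m (by omega) (by omega) hm, hv1]
      omega

theorem padicValNat_two_fib (n : ℕ) (hn : 0 < n) :
    ((n % 3 = 1 ∨ n % 3 = 2) → padicValNat 2 (Nat.fib n) = 0) ∧
    (n % 6 = 3 → padicValNat 2 (Nat.fib n) = 1) ∧
    (n % 12 = 6 → padicValNat 2 (Nat.fib n) = 3) ∧
    (n % 12 = 0 → padicValNat 2 (Nat.fib n) = padicValNat 2 n + 2) := by
  refine ⟨?_, ?_, ?_, ?_⟩
  · intro h
    have key : Nat.fib n % 2 = 1 := by
      rw [fib_mod_mod 3 2 (by decide) (by decide)]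
      rcases h with h | h <;> rw [h] <;> rfl
    exact v2_mod 0 (by norm_num; exact key)
  · intro h
    have key : Nat.fib n % 4 = 2 := by
      rw [fib_mod_mod 6 4 (by decide) (by decide)]
      have h6 : n % 6 = 3 := h
      rw [h6]; rfl
    exact v2_mod 1 (by norm_num; exact key)
  · exact v2_fib_6mod12 n
  · exact aux12 n hn
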